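/- Let A₁,…,A_M be symmetric positive definite p×p matrices, N₁,…,N_M > 0, N* = ∑ Nⱼ, ρⱼ = Nⱼ/N*. Suppose for each j that (1/Nⱼ)Aⱼ → Σ for a common positive definite matrix Σ (as a limit over a directed family). Then (∑ⱼ ρⱼ²/Nⱼ)⁻¹ · ∑ⱼ ρⱼ² Aⱼ⁻¹ − N* (∑ⱼ Aⱼ)⁻¹ → 0. -/

import Mathlib

open Matrix Filter

private lemma inv_tendsto_aux {p : ℕ} (f : ℕ → Matrix (Fin p) (Fin p) ℝ)
    (S : Matrix (Fin p) (Fin p) ℝ) (hdet : S.det ≠ 0)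
    (hf : Tendsto f atTop (nhds S)) :
    Tendsto (fun k => (f k)⁻¹) atTop (nhds S⁻¹) := by
  have hd : Tendsto (fun k => (f k).det) atTop (nhds S.det) :=
    ((continuous_id.matrix_det).tendsto S).comp hf
  have ha : Tendsto (fun k => (f k).adjugate) atTop (nhds S.adjugate) :=
    ((continuous_id.matrix_adjugate).tendsto S).comp hf
  have h := (hd.inv₀ hdet).smul ha
  simpa only [Matrix.inv_def, Ring.inverse_eq_inv'] using h

private lemma avg_tendsto_zero {p M : ℕ} (u : ℕ → Fin M → ℝ)
    (hu0 : ∀ k j, 0 ≤ u k j) (hu1 : ∀ k j, u k j ≤ 1)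
    (E : Fin M → ℕ → Matrix (Fin p) (Fin p) ℝ)
    (hE : ∀ j, Tendsto (fun k => E j k) atTop (nhds 0)) :
    Tendsto (fun k => ∑ j, u k j • E j k) atTop (nhds 0) := by
  refine tendsto_pi_nhds.2 fun i => ?_
  rw [tendsto_pi_nhds]
  intro i'
  have hEe : ∀ j, Tendsto (fun k => E j k i i') atTop (nhds 0) := by
    intro j
    have h := hE j
    replace h := tendsto_pi_nhds.1 h
    have h2 := h i
    rw [tendsto_pi_nhds] at h2
    simpa using h2 i'
  have hg : Tendsto (fun k => ∑ j, |E j k i i'|) atTop (nhds 0) := by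
    have := tendsto_finset_sum (Finset.univ : Finset (Fin M))
      (fun j _ => (hEe j).abs)
    simpa using this
  have hbound : ∀ k, ‖(∑ j, u k j • E j k) i i'‖ ≤ ∑ j, |E j k i i'| := by
    intro k
    have : (∑ j, u k j • E j k) i i' = ∑ j, u k j * E j k i i' := by
      simp [Matrix.sum_apply]
    rw [this, Real.norm_eq_abs]
    calc |∑ j, u k j * E j k i i'| ≤ ∑ j, |u k j * E j k i i'| :=
          Finset.abs_sum_le_sum_abs _ _
      _ ≤ ∑ j, |E j k i i'| := by
          refine Finset.sum_le_sum fun j _ => ?_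
          rw [abs_mul]
          calc |u k j| * |E j k i i'| ≤ 1 * |E j k i i'| := by
                apply mul_le_mul_of_nonneg_right _ (abs_nonneg _)
                rw [abs_of_nonneg (hu0 k j)]; exact hu1 k j
            _ = |E j k i i'| := one_mul _
  have := squeeze_zero_norm hbound hg
  simpa using this

/-- If `(1/Nⱼ) Aⱼ → Σ` (positive definite) with `Nⱼ → ∞`, `N* = ∑ Nⱼ`,
`ρⱼ = Nⱼ/N*`, then `(∑ⱼ ρⱼ²/Nⱼ)⁻¹ ∑ⱼ ρⱼ² Aⱼ⁻¹ − N* (∑ⱼ Aⱼ)⁻¹ → 0`. -/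
theorem alternative_confidence_matrix_approx {p M : ℕ} (hp : 0 < p) (hM : 0 < M)
    (A : ℕ → Fin M → Matrix (Fin p) (Fin p) ℝ)
    (N : ℕ → Fin M → ℝ) (hN : ∀ k j, 0 < N k j)
    (hApd : ∀ k j, (A k j).PosDef)
    (Sig : Matrix (Fin p) (Fin p) ℝ) (hSig : Sig.PosDef)
    (hconv : ∀ j, Tendsto (fun k => (N k j)⁻¹ • A k j) atTop (nhds Sig))
    (hNinf : ∀ j, Tendsto (fun k => N k j) atTop atTop) :
    Tendsto
      (fun k =>
        (∑ j, (N k j / ∑ i, N k i) ^ 2 / N k j)⁻¹ •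
            (∑ j, (N k j / ∑ i, N k i) ^ 2 • (A k j)⁻¹) -
          (∑ i, N k i) • (∑ j, A k j)⁻¹)
      atTop (nhds 0) := by
  haveI : Nonempty (Fin M) := ⟨⟨0, hM⟩⟩
  have hdetS : Sig.det ≠ 0 := hSig.det_pos.ne'
  set T : Matrix (Fin p) (Fin p) ℝ := Sig⁻¹ with hT
  -- abbreviations
  set B : Fin M → ℕ → Matrix (Fin p) (Fin p) ℝ := fun j k => (N k j)⁻¹ • A k j with hBdef
  set S : ℕ → ℝ := fun k => ∑ i, N k i with hSdef
  have hS : ∀ k, 0 < S k := fun k => Finset.sum_pos (fun i _ => hN k i) Finset.univ_nonempty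
  have hdetA : ∀ k j, (A k j).det ≠ 0 := fun k j => (hApd k j).det_pos.ne'
  have hdetB : ∀ j k, (B j k).det ≠ 0 := by
    intro j k
    rw [hBdef]
    simp only [Matrix.det_smul]
    exact mul_ne_zero (pow_ne_zero _ (inv_ne_zero (hN k j).ne')) (hdetA k j)
  -- A⁻¹ = N⁻¹ • B⁻¹
  have hAB : ∀ k j, N k j • B j k = A k j := by
    intro k j
    rw [hBdef, smul_smul, mul_inv_cancel₀ (hN k j).ne', one_smul]
  have hAinv : ∀ k j, (A k j)⁻¹ = (N k j)⁻¹ • (B j k)⁻¹ := by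
    intro k j
    apply Matrix.inv_eq_right_inv
    rw [← hAB k j, Matrix.smul_mul, Matrix.mul_smul, smul_smul,
      Matrix.mul_nonsing_inv _ (Ne.isUnit (hdetB j k)),
      mul_inv_cancel₀ (hN k j).ne', one_smul]
  -- inverse of B tends to T
  have hC : ∀ j, Tendsto (fun k => (B j k)⁻¹) atTop (nhds T) :=
    fun j => inv_tendsto_aux _ _ hdetS (hconv j)
  -- weights
  set w : ℕ → Fin M → ℝ := fun k j => (N k j / S k) ^ 2 / N k j with hwdef
  have hw : ∀ k j, 0 < w k j := fun k j =>
    div_pos (pow_pos (div_pos (hN k j) (hS k)) 2) (hN k j)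
  set W : ℕ → ℝ := fun k => ∑ j, w k j with hWdef
  have hW : ∀ k, 0 < W k := fun k => Finset.sum_pos (fun j _ => hw k j) Finset.univ_nonempty
  set u : ℕ → Fin M → ℝ := fun k j => w k j / W k with hudef
  have hu0 : ∀ k j, 0 ≤ u k j := fun k j => le_of_lt (div_pos (hw k j) (hW k))
  have hu1 : ∀ k j, u k j ≤ 1 := by
    intro k j
    rw [hudef]
    exact div_le_one_of_le₀ (Finset.single_le_sum (fun i _ => (hw k i).le) (Finset.mem_univ j))
      (hW k).le
  have husum : ∀ k, ∑ j, u k j = 1 := by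
    intro k
    rw [hudef]
    simp only
    rw [← Finset.sum_div]
    exact div_self (hW k).ne'
  -- first term equals ∑ u • B⁻¹
  have key1 : ∀ k, (W k)⁻¹ • (∑ j, (N k j / S k) ^ 2 • (A k j)⁻¹)
      = ∑ j, u k j • (B j k)⁻¹ := by
    intro k
    rw [Finset.smul_sum]
    refine Finset.sum_congr rfl fun j _ => ?_
    rw [hAinv k j, smul_smul, smul_smul, hudef, hwdef]
    congr 1
    field_simp
  -- first term tends to T
  have h1 : Tendsto (fun k => (W k)⁻¹ • (∑ j, (N k j / S k) ^ 2 • (A k j)⁻¹))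
      atTop (nhds T) := by
    have hz : Tendsto (fun k => ∑ j, u k j • ((B j k)⁻¹ - T)) atTop (nhds 0) :=
      avg_tendsto_zero u hu0 hu1 (fun j k => (B j k)⁻¹ - T)
        (fun j => by simpa [sub_self] using (hC j).sub (tendsto_const_nhds (x := T)))
    have heq : ∀ k, (W k)⁻¹ • (∑ j, (N k j / S k) ^ 2 • (A k j)⁻¹)
        = T + ∑ j, u k j • ((B j k)⁻¹ - T) := by
      intro k
      rw [key1 k]
      have : ∑ j, u k j • ((B j k)⁻¹ - T)
          = (∑ j, u k j • (B j k)⁻¹) - (∑ j, u k j) • T := by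
        rw [Finset.sum_smul, ← Finset.sum_sub_distrib]
        exact Finset.sum_congr rfl fun j _ => smul_sub _ _ _
      rw [this, husum k, one_smul, add_sub_cancel]
    have := (tendsto_const_nhds (x := T) (f := atTop (α := ℕ))).add hz
    rw [add_zero] at this
    exact Tendsto.congr (fun k => (heq k).symm) this
  -- second term
  set D : ℕ → Matrix (Fin p) (Fin p) ℝ := fun k => (S k)⁻¹ • ∑ j, A k j with hDdef
  have hrho0 : ∀ k j, 0 ≤ N k j / S k := fun k j => (div_pos (hN k j) (hS k)).le
  have hrho1 : ∀ k j, N k j / S k ≤ 1 := fun k j =>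
    div_le_one_of_le₀ (Finset.single_le_sum (fun i _ => (hN k i).le) (Finset.mem_univ j))
      (hS k).le
  have hrhosum : ∀ k, ∑ j, N k j / S k = 1 := by
    intro k
    rw [← Finset.sum_div, div_self (hS k).ne']
  have hD : Tendsto D atTop (nhds Sig) := by
    have hz : Tendsto (fun k => ∑ j, (N k j / S k) • (B j k - Sig)) atTop (nhds 0) :=
      avg_tendsto_zero (fun k j => N k j / S k) hrho0 hrho1 (fun j k => B j k - Sig)
        (fun j => by simpa [sub_self] using (hconv j).sub (tendsto_const_nhds (x := Sig)))
    have heq : ∀ k, D k = Sig + ∑ j, (N k j / S k) • (B j k - Sig) := by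
      intro k
      have h1 : ∑ j, (N k j / S k) • (B j k - Sig)
          = (∑ j, (N k j / S k) • B j k) - (∑ j, N k j / S k) • Sig := by
        rw [Finset.sum_smul, ← Finset.sum_sub_distrib]
        exact Finset.sum_congr rfl fun j _ => smul_sub _ _ _
      rw [h1, hrhosum k, one_smul, add_sub_cancel, hDdef]
      simp only
      rw [Finset.smul_sum]
      refine Finset.sum_congr rfl fun j _ => ?_
      rw [← hAB k j, smul_smul, div_eq_inv_mul]
    have := (tendsto_const_nhds (x := Sig) (f := atTop (α := ℕ))).add hz
    rw [add_zero] at this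
    exact Tendsto.congr (fun k => (heq k).symm) this
  have hDinv : Tendsto (fun k => (D k)⁻¹) atTop (nhds T) := inv_tendsto_aux _ _ hdetS hD
  have hDdet : ∀ᶠ k in atTop, (D k).det ≠ 0 :=
    (((continuous_id.matrix_det).tendsto Sig).comp hD).eventually_ne hdetS
  have heq2 : (fun k => (D k)⁻¹) =ᶠ[atTop] fun k => S k • (∑ j, A k j)⁻¹ := by
    filter_upwards [hDdet] with k hk
    have hSD : ∑ j, A k j = S k • D k := by
      rw [hDdef]
      simp only
      rw [smul_smul, mul_inv_cancel₀ (hS k).ne', one_smul]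
    have hinv : (S k • D k)⁻¹ = (S k)⁻¹ • (D k)⁻¹ := by
      apply Matrix.inv_eq_right_inv
      rw [Matrix.smul_mul, Matrix.mul_smul, smul_smul,
        Matrix.mul_nonsing_inv _ (Ne.isUnit hk), mul_inv_cancel₀ (hS k).ne', one_smul]
    rw [hSD, hinv, smul_smul, mul_inv_cancel₀ (hS k).ne', one_smul]
  have h2 : Tendsto (fun k => S k • (∑ j, A k j)⁻¹) atTop (nhds T) := hDinv.congr' heq2
  have := h1.sub h2
  rw [sub_self] at this
  exact this
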